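/- Let G = (S, 𝓕) be a local poset greedoid. Then the following three conditions are equivalent: (i) G satisfies the local forest property (i.e., G is a local forest greedoid); (ii) every path in G has a unique feasible ordering; (iii) whenever (a_1, a_2, …, a_k) is the feasible ordering of a path, the set {a_1, a_2, …, a_i} is also a path for every 1 ≤ i ≤ k. -/

import Mathlib

open Finset

variable {α : Type*} [DecidableEq α] [Fintype α]

/-- `X` is subfeasible: contained in some feasible set. -/
def Subfeasible (F : Set (Finset α)) (X : Finset α) : Prop :=
  ∃ Y ∈ F, X ⊆ Y

/-- Greedoid axioms: `∅` is feasible, and the exchange property. -/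
def IsGreedoid (F : Set (Finset α)) : Prop :=
  (∅ : Finset α) ∈ F ∧
    ∀ X ∈ F, ∀ Y ∈ F, X.card < Y.card → ∃ y ∈ Y, y ∉ X ∧ insert y X ∈ F

/-- Local union property. -/
def LocalUnion (F : Set (Finset α)) : Prop :=
  ∀ A ∈ F, ∀ B ∈ F, Subfeasible F (A ∪ B) → A ∪ B ∈ F

/-- Local intersection property. -/
def LocalInter (F : Set (Finset α)) : Prop :=
  ∀ A ∈ F, ∀ B ∈ F, Subfeasible F (A ∪ B) → A ∩ B ∈ F

/-- Local forest property. -/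
def LocalForest (F : Set (Finset α)) : Prop :=
  ∀ A ∈ F, ∀ x y z : α,
    insert x A ∈ F → insert y A ∈ F → insert x (insert y A) ∈ F →
      insert z (insert x (insert y A)) ∈ F →
      insert z (insert x A) ∈ F ∨ insert z (insert y A) ∈ F

/-- The rank function of a greedoid: max cardinality of a feasible subset. -/
noncomputable def grank (F : Set (Finset α)) (A : Finset α) : ℕ :=
  sSup {n : ℕ | ∃ X ∈ F, X ⊆ A ∧ X.card = n}

/-- A base: a feasible set of maximum size. -/
def IsBase (F : Set (Finset α)) (B : Finset α) : Prop :=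
  B ∈ F ∧ ∀ C ∈ F, C.card ≤ B.card

/-- The set of continuations of a feasible set `A`. -/
def Gamma (F : Set (Finset α)) (A : Finset α) : Set α :=
  {x | x ∉ A ∧ insert x A ∈ F}

/-- `P` is the `x`-path in `A`: the unique inclusion-minimal feasible subset
of `A` containing `x`. -/
def IsPathIn (F : Set (Finset α)) (A : Finset α) (x : α) (P : Finset α) : Prop :=
  P ∈ F ∧ P ⊆ A ∧ x ∈ P ∧ ∀ Q ∈ F, Q ⊆ A → x ∈ Q → P ⊆ Q

/-- `P` is a path. -/
def IsPath (F : Set (Finset α)) (P : Finset α) : Prop :=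
  ∃ A ∈ F, ∃ x ∈ A, IsPathIn F A x P

/-- `l` is a feasible ordering (of the set of its elements): every prefix is feasible. -/
def FeasibleOrdering (F : Set (Finset α)) (l : List α) : Prop :=
  l.Nodup ∧ ∀ i : ℕ, (l.take i).toFinset ∈ F

/-- `B` is a greedy base for maximizing `w`. -/
def GreedyMaxBase (F : Set (Finset α)) (w : Finset α → ℝ) (B : Finset α) : Prop :=
  IsBase F B ∧ ∃ l : List α, FeasibleOrdering F l ∧ l.toFinset = B ∧
    ∀ (i : ℕ) (hi : i < l.length), ∀ y ∈ Gamma F (l.take i).toFinset,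
      w (insert y (l.take i).toFinset) ≤ w (insert (l.get ⟨i, hi⟩) (l.take i).toFinset)

/-- `B` is a greedy base for minimizing `w`. -/
def GreedyMinBase (F : Set (Finset α)) (w : Finset α → ℝ) (B : Finset α) : Prop :=
  IsBase F B ∧ ∃ l : List α, FeasibleOrdering F l ∧ l.toFinset = B ∧
    ∀ (i : ℕ) (hi : i < l.length), ∀ y ∈ Gamma F (l.take i).toFinset,
      w (insert (l.get ⟨i, hi⟩) (l.take i).toFinset) ≤ w (insert y (l.take i).toFinset)

/-- The shadow vector of a feasible set `B`: `sh_B(x) = |B| - r(B \ {x})`. -/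
noncomputable def shVec (F : Set (Finset α)) (B : Finset α) : α → ℝ :=
  fun x => (B.card : ℝ) - (grank F (B.erase x) : ℝ)

section Aux

variable {F : Set (Finset α)}

private lemma ordering_toFinset_mem {l : List α} (h : FeasibleOrdering F l) :
    l.toFinset ∈ F := by
  have := h.2 l.length
  rwa [List.take_length] at this

private lemma take_toFinset_subset (l : List α) (i : ℕ) :
    (l.take i).toFinset ⊆ l.toFinset := by
  intro a ha
  rw [List.mem_toFinset] at *
  exact List.take_subset i l ha

private lemma take_nodup {l : List α} (h : l.Nodup) (i : ℕ) : (l.take i).Nodup :=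
  h.sublist (List.take_sublist i l)

private lemma take_card {l : List α} (h : l.Nodup) {i : ℕ} (hi : i ≤ l.length) :
    (l.take i).toFinset.card = i := by
  rw [List.toFinset_card_of_nodup (take_nodup h i), List.length_take]
  omega

private lemma get_take_aux (L : List α) {i j : ℕ} (hi : i < L.length) (hj : i < j) :
    L.get ⟨i, hi⟩ = (L.take j).get ⟨i, by rw [List.length_take]; omega⟩ := by
  simp

private lemma augment (hG : IsGreedoid F) {A X : Finset α} (hA : A ∈ F) (hX : X ∈ F)
    (hXA : X ⊆ A) (hne : X ≠ A) : ∃ w ∈ A, w ∉ X ∧ insert w X ∈ F :=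
  hG.2 X hX A hA (Finset.card_lt_card (hXA.ssubset_of_ne hne))

private lemma extend_ordering (hG : IsGreedoid F) {A : Finset α} (hA : A ∈ F) :
    ∀ (n : ℕ) (l : List α), FeasibleOrdering F l → l.toFinset ⊆ A → A.card ≤ l.length + n →
      ∃ l', FeasibleOrdering F l' ∧ l'.toFinset = A ∧ l <+: l' := by
  intro n
  induction n with
  | zero =>
    intro l hl hsub hcard
    refine ⟨l, hl, ?_, List.prefix_refl l⟩
    refine Finset.eq_of_subset_of_card_le hsub ?_
    rw [List.toFinset_card_of_nodup hl.1]
    omega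
  | succ n ih =>
    intro l hl hsub hcard
    by_cases h : l.toFinset = A
    · exact ⟨l, hl, h, List.prefix_refl l⟩
    · obtain ⟨w, hwA, hwl, hins⟩ := augment hG hA (ordering_toFinset_mem hl) hsub h
      have htf : (l ++ [w]).toFinset = insert w l.toFinset := by
        ext a; simp [or_comm]
      have hl' : FeasibleOrdering F (l ++ [w]) := by
        constructor
        · rw [List.nodup_append]
          refine ⟨hl.1, List.nodup_singleton w, ?_⟩
          intro a ha b hb
          rw [List.mem_singleton] at hb
          subst hb
          rintro rfl
          exact hwl (List.mem_toFinset.2 ha)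
        · intro i
          rw [List.take_append]
          rcases le_or_gt i l.length with h1 | h1
          · have h0 : i - l.length = 0 := by omega
            rw [h0, List.take_zero, List.append_nil]
            exact hl.2 i
          · have h2 : l.take i = l := List.take_of_length_le (by omega)
            have h3 : List.take (i - l.length) [w] = [w] := by
              apply List.take_of_length_le
              simp; omega
            rw [h2, h3, htf]
            exact hins
      have hlen : l.toFinset.card = l.length := List.toFinset_card_of_nodup hl.1
      have hlt : l.toFinset.card < A.card := Finset.card_lt_card (hsub.ssubset_of_ne h)
      obtain ⟨l', h1, h2, h3⟩ := ih (l ++ [w]) hl'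
        (by rw [htf]; exact Finset.insert_subset hwA hsub)
        (by rw [List.length_append, List.length_singleton]; omega)
      exact ⟨l', h1, h2, (List.prefix_append l [w]).trans h3⟩

private lemma exists_ordering (hG : IsGreedoid F) {A : Finset α} (hA : A ∈ F) :
    ∃ l, FeasibleOrdering F l ∧ l.toFinset = A := by
  have hnil : FeasibleOrdering F ([] : List α) := by
    refine ⟨List.nodup_nil, fun i => ?_⟩
    simpa using hG.1
  obtain ⟨l, h1, h2, _⟩ := extend_ordering hG hA A.card [] hnil (by simp) (by simp)
  exact ⟨l, h1, h2⟩

private lemma exists_pathIn (hI : LocalInter F) {A : Finset α} (hA : A ∈ F) {x : α}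
    (hx : x ∈ A) : ∃ P, IsPathIn F A x P := by
  classical
  have hne : (A.powerset.filter (fun X => X ∈ F ∧ x ∈ X)).Nonempty :=
    ⟨A, by simp [Finset.mem_filter, Finset.mem_powerset, hA, hx]⟩
  obtain ⟨P, hP, hmin⟩ := Finset.exists_min_image _ Finset.card hne
  simp only [Finset.mem_filter, Finset.mem_powerset] at hP
  refine ⟨P, hP.2.1, hP.1, hP.2.2, ?_⟩
  intro Q hQ hQA hxQ
  have hPQ : P ∩ Q ∈ F := hI P hP.2.1 Q hQ ⟨A, hA, Finset.union_subset hP.1 hQA⟩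
  have hmem : P ∩ Q ∈ A.powerset.filter (fun X => X ∈ F ∧ x ∈ X) := by
    simp only [Finset.mem_filter, Finset.mem_powerset]
    exact ⟨Finset.inter_subset_left.trans hP.1, hPQ, Finset.mem_inter.2 ⟨hP.2.2, hxQ⟩⟩
  have heq : P ∩ Q = P :=
    Finset.eq_of_subset_of_card_le Finset.inter_subset_left (hmin _ hmem)
  rw [← heq]
  exact Finset.inter_subset_right

private lemma path_not_in_prefix {A P : Finset α} {z : α} (hp : IsPathIn F A z P)
    {l : List α} (hl : FeasibleOrdering F l) (hlP : l.toFinset = P) {i : ℕ}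
    (hi : i < l.length) : z ∉ (l.take i).toFinset := by
  intro hz
  have hsub : (l.take i).toFinset ⊆ P := by
    rw [← hlP]; exact take_toFinset_subset l i
  have hPsub := hp.2.2.2 _ (hl.2 i) (hsub.trans hp.2.1) hz
  have hc1 : P.card ≤ i := by
    have := Finset.card_le_card hPsub
    rwa [take_card hl.1 (le_of_lt hi)] at this
  have hc2 : P.card = l.length := by
    rw [← hlP, List.toFinset_card_of_nodup hl.1]
  omega

private lemma erase_contra {A P : Finset α} {z a : α} (hp : IsPathIn F A z P)
    (ha : a ∈ P) (haz : a ≠ z) (hPa : P.erase a ∈ F) : False := by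
  have hsub := hp.2.2.2 _ hPa ((Finset.erase_subset a P).trans hp.2.1)
    (Finset.mem_erase.2 ⟨Ne.symm haz, hp.2.2.1⟩)
  exact (Finset.notMem_erase a P) (hsub ha)

private lemma reach_contra {A P Q : Finset α} {z b : α} (hp : IsPathIn F A z P)
    (hQ : Q ∈ F) (hQP : Q ⊆ P) (hzQ : z ∈ Q) (hbP : b ∈ P) (hbQ : b ∉ Q) : False :=
  hbQ (hp.2.2.2 Q hQ (hQP.trans hp.2.1) hzQ hbP)

end Aux

section Aux2

variable {F : Set (Finset α)}

private lemma key (hG : IsGreedoid F) (hF : LocalForest F) {A P : Finset α} {z : α}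
    (hp : IsPathIn F A z P) :
    ∀ (n : ℕ) (E : Finset α) (a b : α), E ∈ F → E ⊆ P → a ∈ E → b ∈ E → a ≠ b →
      a ≠ z → b ≠ z → E.erase a ∈ F → E.erase b ∈ F → (E.erase a).erase b ∈ F →
      (P \ E).card ≤ n → False := by
  intro n
  induction n with
  | zero =>
    intro E a b hE hEP haE hbE hab haz hbz hEa hEb hEab hcard
    have hPE : P ⊆ E := by
      have h0 : P \ E = ∅ := Finset.card_eq_zero.1 (Nat.le_zero.1 hcard)
      rwa [Finset.sdiff_eq_empty_iff_subset] at h0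
    have heq : E = P := Finset.Subset.antisymm hEP hPE
    exact erase_contra hp (heq ▸ haE) haz (heq ▸ hEa)
  | succ n ih =>
    intro E a b hE hEP haE hbE hab haz hbz hEa hEb hEab hcard
    by_cases heq : E = P
    · exact erase_contra hp (heq ▸ haE) haz (heq ▸ hEa)
    · obtain ⟨w, hwP, hwE, hwIns⟩ := augment hG hp.1 hE hEP heq
      have e2 : insert b ((E.erase a).erase b) = E.erase a :=
        Finset.insert_erase (Finset.mem_erase.2 ⟨Ne.symm hab, hbE⟩)
      have e1 : insert a ((E.erase a).erase b) = E.erase b := by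
        rw [Finset.erase_right_comm,
          Finset.insert_erase (Finset.mem_erase.2 ⟨hab, haE⟩)]
      have e3 : insert a (insert b ((E.erase a).erase b)) = E := by
        rw [e2, Finset.insert_erase haE]
      have hres := hF _ hEab a b w (by rw [e1]; exact hEb) (by rw [e2]; exact hEa)
        (by rw [e3]; exact hE) (by rw [e3]; exact hwIns)
      have hwb : w ≠ b := fun h => hwE (h ▸ hbE)
      have hwa : w ≠ a := fun h => hwE (h ▸ haE)
      have hwPE : w ∈ P \ E := Finset.mem_sdiff.2 ⟨hwP, hwE⟩
      have hcard' : (P \ insert w E).card ≤ n := by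
        rw [Finset.sdiff_insert, Finset.card_erase_of_mem hwPE]
        have : 1 ≤ (P \ E).card := Finset.card_pos.2 ⟨w, hwPE⟩
        omega
      rcases hres with hcase | hcase
      · -- insert w (insert a (...)) = insert w (E.erase b) ∈ F
        rw [e1] at hcase
        by_cases hwz : w = z
        · subst hwz
          refine reach_contra hp hcase ?_ (Finset.mem_insert_self w _) (hEP hbE) ?_
          · exact Finset.insert_subset hwP ((Finset.erase_subset b E).trans hEP)
          · simp only [Finset.mem_insert, Finset.mem_erase]
            push_neg
            exact ⟨Ne.symm hwb, fun h => absurd rfl h⟩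
        · refine ih (insert w E) w b hwIns (Finset.insert_subset hwP hEP)
            (Finset.mem_insert_self w E) (Finset.mem_insert_of_mem hbE) hwb hwz hbz
            ?_ ?_ ?_ hcard'
          · rw [Finset.erase_insert hwE]; exact hE
          · rw [Finset.erase_insert_of_ne hwb]; exact hcase
          · rw [Finset.erase_insert hwE]; exact hEb
      · rw [e2] at hcase
        by_cases hwz : w = z
        · subst hwz
          refine reach_contra hp hcase ?_ (Finset.mem_insert_self w _) (hEP haE) ?_
          · exact Finset.insert_subset hwP ((Finset.erase_subset a E).trans hEP)
          · simp only [Finset.mem_insert, Finset.mem_erase]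
            push_neg
            exact ⟨Ne.symm hwa, fun h => absurd rfl h⟩
        · refine ih (insert w E) w a hwIns (Finset.insert_subset hwP hEP)
            (Finset.mem_insert_self w E) (Finset.mem_insert_of_mem haE) hwa hwz haz
            ?_ ?_ ?_ hcard'
          · rw [Finset.erase_insert hwE]; exact hE
          · rw [Finset.erase_insert_of_ne hwa]; exact hcase
          · rw [Finset.erase_insert hwE]; exact hEa

private lemma first_diff : ∀ (l₁ l₂ : List α), l₁.length = l₂.length → l₁ ≠ l₂ →
    ∃ (c t₁ t₂ : List α) (x y : α), l₁ = c ++ x :: t₁ ∧ l₂ = c ++ y :: t₂ ∧ x ≠ y := by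
  intro l₁
  induction l₁ with
  | nil =>
    intro l₂ hlen hne
    cases l₂ with
    | nil => exact absurd rfl hne
    | cons b s => simp at hlen
  | cons a t ih =>
    intro l₂ hlen hne
    cases l₂ with
    | nil => simp at hlen
    | cons b s =>
      by_cases hab : a = b
      · subst hab
        have hts : t ≠ s := fun h => hne (by rw [h])
        obtain ⟨c, t₁, t₂, x, y, h1, h2, hxy⟩ := ih s (by simpa using hlen) hts
        exact ⟨a :: c, t₁, t₂, x, y, by simp [h1], by simp [h2], hxy⟩
      · exact ⟨[], t, s, a, b, rfl, rfl, hab⟩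

private lemma lfp_to_unique (hG : IsGreedoid F) (hU : LocalUnion F) (hF : LocalForest F) :
    ∀ P : Finset α, IsPath F P → ∀ l₁ l₂ : List α,
      FeasibleOrdering F l₁ → l₁.toFinset = P →
      FeasibleOrdering F l₂ → l₂.toFinset = P → l₁ = l₂ := by
  intro P hPath l₁ l₂ hl₁ hP₁ hl₂ hP₂
  by_contra hne
  obtain ⟨A, hA, z, hzA, hp⟩ := hPath
  have hlen : l₁.length = l₂.length := by
    rw [← List.toFinset_card_of_nodup hl₁.1, ← List.toFinset_card_of_nodup hl₂.1, hP₁, hP₂]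
  obtain ⟨c, t₁, t₂, x, y, e1, e2, hxy⟩ := first_diff l₁ l₂ hlen hne
  set C := c.toFinset with hCdef
  have hxc : x ∉ C := by
    have := hl₁.1
    rw [e1, List.nodup_append] at this
    intro hmem
    exact this.2.2 x (List.mem_toFinset.1 hmem) x List.mem_cons_self rfl
  have hyc : y ∉ C := by
    have := hl₂.1
    rw [e2, List.nodup_append] at this
    intro hmem
    exact this.2.2 y (List.mem_toFinset.1 hmem) y List.mem_cons_self rfl
  have hC : C ∈ F := by
    have := hl₁.2 c.length
    rwa [e1, List.take_left] at this
  have htake1 : l₁.take (c.length + 1) = c ++ [x] := by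
    rw [e1, List.take_append, List.take_of_length_le (by omega)]
    congr 1
    have hh : c.length + 1 - c.length = 1 := by omega
    rw [hh]
    rfl
  have htake2 : l₂.take (c.length + 1) = c ++ [y] := by
    rw [e2, List.take_append, List.take_of_length_le (by omega)]
    congr 1
    have hh : c.length + 1 - c.length = 1 := by omega
    rw [hh]
    rfl
  have htf1 : (l₁.take (c.length + 1)).toFinset = insert x C := by
    rw [htake1, hCdef]; ext a; simp [or_comm]
  have htf2 : (l₂.take (c.length + 1)).toFinset = insert y C := by
    rw [htake2, hCdef]; ext a; simp [or_comm]
  have hxCF : insert x C ∈ F := by rw [← htf1]; exact hl₁.2 _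
  have hyCF : insert y C ∈ F := by rw [← htf2]; exact hl₂.2 _
  have hlen1 : l₁.length = c.length + 1 + t₁.length := by
    rw [e1]; simp [List.length_append]; omega
  have hlen2 : l₂.length = c.length + 1 + t₂.length := by
    rw [e2]; simp [List.length_append]; omega
  have ht1 : t₁.length ≠ 0 := by
    intro h0
    have ht2 : t₂.length = 0 := by omega
    have ht1' : t₁ = [] := List.length_eq_zero_iff.1 h0
    have ht2' : t₂ = [] := List.length_eq_zero_iff.1 ht2
    subst ht1'; subst ht2'
    have hx' : x ∈ P := by rw [← hP₁, e1]; simp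
    rw [← hP₂, e2] at hx'
    simp only [List.toFinset_append, Finset.mem_union, List.mem_toFinset,
      List.toFinset_cons, List.toFinset_nil] at hx'
    rcases hx' with h | h
    · exact hxc (List.mem_toFinset.2 h)
    · simp at h
      exact hxy h
  have hi1 : c.length + 1 < l₁.length := by omega
  have hi2 : c.length + 1 < l₂.length := by omega
  have hxP : x ∈ P := by rw [← hP₁, e1]; simp
  have hyP : y ∈ P := by rw [← hP₂, e2]; simp
  have hCP : C ⊆ P := by
    rw [← hP₁, e1]
    intro a ha
    simp only [List.toFinset_append, Finset.mem_union]
    exact Or.inl ha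
  have hxz : x ≠ z := by
    intro h
    refine path_not_in_prefix hp hl₁ hP₁ hi1 ?_
    rw [htf1, ← h]
    exact Finset.mem_insert_self x C
  have hyz : y ≠ z := by
    intro h
    refine path_not_in_prefix hp hl₂ hP₂ hi2 ?_
    rw [htf2, ← h]
    exact Finset.mem_insert_self y C
  set E := insert x (insert y C) with hEdef
  have hEP : E ⊆ P := by
    rw [hEdef]
    exact Finset.insert_subset hxP (Finset.insert_subset hyP hCP)
  have hunion : insert x C ∪ insert y C = E := by
    rw [hEdef, Finset.insert_union, Finset.union_insert, Finset.union_self]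
  have hE : E ∈ F := by
    have := hU _ hxCF _ hyCF ⟨A, hA, by rw [hunion]; exact hEP.trans hp.2.1⟩
    rwa [hunion] at this
  have hxMem : x ∉ insert y C := by
    simp only [Finset.mem_insert]
    push_neg
    exact ⟨hxy, hxc⟩
  have hEx : E.erase x = insert y C := by
    rw [hEdef, Finset.erase_insert hxMem]
  have hEy : E.erase y = insert x C := by
    rw [hEdef, Finset.erase_insert_of_ne hxy, Finset.erase_insert hyc]
  have hExy : (E.erase x).erase y = C := by
    rw [hEx, Finset.erase_insert hyc]
  exact key hG hF hp (P \ E).card E x y hE hEP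
    (Finset.mem_insert_self x _) (Finset.mem_insert_of_mem (Finset.mem_insert_self y C))
    hxy hxz hyz (by rw [hEx]; exact hyCF) (by rw [hEy]; exact hxCF) (by rw [hExy]; exact hC) le_rfl

end Aux2

section Aux3

variable {F : Set (Finset α)}

private lemma unique_to_prefix (hG : IsGreedoid F) (hI : LocalInter F)
    (h2 : ∀ P : Finset α, IsPath F P → ∀ l₁ l₂ : List α,
      FeasibleOrdering F l₁ → l₁.toFinset = P →
      FeasibleOrdering F l₂ → l₂.toFinset = P → l₁ = l₂) :
    ∀ P : Finset α, IsPath F P → ∀ l : List α,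
      FeasibleOrdering F l → l.toFinset = P →
      ∀ i : ℕ, 1 ≤ i → i ≤ l.length → IsPath F (l.take i).toFinset := by
  intro P hPath l hl hlP i hi1 hi2
  have hPF : P ∈ F := by
    obtain ⟨A, hA, x₀, hx₀, hp⟩ := hPath
    exact hp.1
  have hilt : i - 1 < l.length := by omega
  set a := l.get ⟨i - 1, hilt⟩ with ha
  have haP : a ∈ P := by
    rw [← hlP]
    exact List.mem_toFinset.2 (List.get_mem l _)
  obtain ⟨Q, hQ⟩ := exists_pathIn hI hPF haP
  obtain ⟨lQ, hlQ, hlQQ⟩ := exists_ordering hG hQ.1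
  obtain ⟨l', hl', hl'P, hpre⟩ := extend_ordering hG hPF P.card lQ hlQ
    (by rw [hlQQ]; exact hQ.2.1) (Nat.le_add_left _ _)
  have hll' : l = l' := h2 P hPath l l' hl hlP hl' hl'P
  subst hll'
  set q := lQ.length with hqdef
  have htakeq : l.take q = lQ := (List.prefix_iff_eq_take.1 hpre).symm
  have hQset : (l.take q).toFinset = Q := by rw [htakeq, hlQQ]
  have haTake : a ∈ (l.take i).toFinset := by
    rw [List.mem_toFinset]
    have hgt : l.get ⟨i - 1, hilt⟩ = (l.take i).get ⟨i - 1, by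
        rw [List.length_take]; omega⟩ := get_take_aux l hilt (by omega)
    rw [ha, hgt]
    exact List.get_mem _ _
  have hQsub : Q ⊆ (l.take i).toFinset := by
    refine hQ.2.2.2 _ (hl.2 i) ?_ haTake
    rw [← hlP]
    exact take_toFinset_subset l i
  have hq_card : Q.card = q := by
    rw [← hlQQ, List.toFinset_card_of_nodup hlQ.1]
  have hq_le_i : q ≤ i := by
    have := Finset.card_le_card hQsub
    rwa [take_card hl.1 hi2, hq_card] at this
  have hqlen : q ≤ l.length := by omega
  have haQ : a ∈ l.take q := by
    rw [← List.mem_toFinset, hQset]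
    exact hQ.2.2.1
  obtain ⟨⟨j, hj⟩, hgj⟩ := List.mem_iff_get.1 haQ
  have hjq : j < q := by
    rw [List.length_take] at hj
    omega
  have hjl : j < l.length := by omega
  have hgj' : l.get ⟨j, hjl⟩ = a := by
    rw [get_take_aux l hjl hjq]
    exact hgj
  have hji : j = i - 1 := by
    have heq : l.get ⟨j, hjl⟩ = l.get ⟨i - 1, hilt⟩ := by rw [hgj', ha]
    have := (List.Nodup.get_inj_iff hl.1).1 heq
    exact congrArg Fin.val this
  have hiq : i = q := by omega
  refine ⟨P, hPF, a, haP, ?_⟩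
  have : (l.take i).toFinset = Q := by rw [hiq, hQset]
  rw [this]
  exact hQ

private lemma prefix_to_lfp (hG : IsGreedoid F) (hU : LocalUnion F) (hI : LocalInter F)
    (h3 : ∀ P : Finset α, IsPath F P → ∀ l : List α,
      FeasibleOrdering F l → l.toFinset = P →
      ∀ i : ℕ, 1 ≤ i → i ≤ l.length → IsPath F (l.take i).toFinset) :
    LocalForest F := by
  intro A hA x y z hx hy hxy hxyz
  by_cases hzx : z ∈ insert x A
  · left; rw [Finset.insert_eq_self.2 hzx]; exact hx
  by_cases hzy : z ∈ insert y A
  · right; rw [Finset.insert_eq_self.2 hzy]; exact hy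
  by_cases hxyeq : x = y
  · subst hxyeq
    rw [Finset.insert_idem] at hxyz
    exact Or.inl hxyz
  by_cases hxA : x ∈ A
  · rw [Finset.insert_eq_self.2 (Finset.mem_insert_of_mem hxA)] at hxyz
    exact Or.inr hxyz
  by_cases hyA : y ∈ A
  · rw [Finset.insert_eq_self.2 hyA] at hxyz
    exact Or.inl hxyz
  have hzA : z ∉ A := fun h => hzx (Finset.mem_insert_of_mem h)
  have hzxne : z ≠ x := fun h => hzx (h ▸ Finset.mem_insert_self x A)
  have hzyne : z ≠ y := fun h => hzy (h ▸ Finset.mem_insert_self y A)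
  set B := insert z (insert x (insert y A)) with hBdef
  have hzB : z ∈ B := Finset.mem_insert_self z _
  obtain ⟨P, hp⟩ := exists_pathIn hI hxyz hzB
  have hPath : IsPath F P := ⟨B, hxyz, z, hzB, hp⟩
  obtain ⟨l, hl, hlP⟩ := exists_ordering hG hp.1
  set k := l.length with hkdef
  have hlenP : P.card = k := by rw [← hlP, List.toFinset_card_of_nodup hl.1]
  have hPz : z ∈ P := hp.2.2.1
  have hkpos : 1 ≤ k := by
    have : 0 < P.card := Finset.card_pos.2 ⟨z, hPz⟩
    omega
  set P' := (l.take (k - 1)).toFinset with hP'def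
  have hP'F : P' ∈ F := hl.2 _
  have hzP' : z ∉ P' := path_not_in_prefix hp hl hlP (by omega)
  have hP'sub : P' ⊆ P := by rw [← hlP]; exact take_toFinset_subset l (k - 1)
  have hPeq : P = insert z P' := by
    refine (Finset.eq_of_subset_of_card_le (Finset.insert_subset hPz hP'sub) ?_).symm
    rw [Finset.card_insert_of_notMem hzP', hP'def, take_card hl.1 (by omega)]
    omega
  have hP'B : P' ⊆ B := hP'sub.trans hp.2.1
  -- main contradiction machine
  have main : ∀ u v : α, ∀ iv : ℕ, ∀ (hv : iv < l.length), iv < k - 1 →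
      u ∈ l.take iv → l.get ⟨iv, hv⟩ = v → u ∉ A → u ≠ v →
      insert v A ∈ F → insert v A ⊆ B → False := by
    intro u v iv hv hivk hu hgv huA huv hvF hvB
    set T := (l.take (iv + 1)).toFinset with hTdef
    have hT : IsPath F T := h3 P hPath l hl hlP (iv + 1) (by omega) (by omega)
    obtain ⟨D, hD, w, hwD, hq⟩ := hT
    have hordT : FeasibleOrdering F (l.take (iv + 1)) := by
      refine ⟨take_nodup hl.1 _, fun i => ?_⟩
      rw [List.take_take]
      exact hl.2 _
    have hlenT : (l.take (iv + 1)).length = iv + 1 := by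
      rw [List.length_take]; omega
    have hwT : w ∈ T := hq.2.2.1
    have hwpre : w ∉ ((l.take (iv + 1)).take iv).toFinset := by
      refine path_not_in_prefix hq hordT rfl ?_
      omega
    rw [List.take_take, min_eq_left (by omega)] at hwpre
    -- w = v
    obtain ⟨⟨j, hjlen⟩, hgj⟩ := List.mem_iff_get.1 (List.mem_toFinset.1 hwT)
    have hjk : j < iv + 1 := by
      rw [List.length_take] at hjlen; omega
    have hjl : j < l.length := by omega
    have hgj' : l.get ⟨j, hjl⟩ = w := by
      rw [get_take_aux l hjl hjk]
      exact hgj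
    have hwv : w = v := by
      by_cases hjiv : j < iv
      · exfalso
        apply hwpre
        rw [List.mem_toFinset, ← hgj']
        have : l.get ⟨j, hjl⟩ = (l.take iv).get ⟨j, by rw [List.length_take]; omega⟩ :=
          get_take_aux l hjl hjiv
        rw [this]
        exact List.get_mem _ _
      · have hjev : (⟨j, hjl⟩ : Fin l.length) = ⟨iv, hv⟩ := by rw [Fin.mk.injEq]; omega
        rw [← hgj', ← hgv, hjev]
    -- T ⊆ insert v A via minimality and LIP
    have hTsubP : T ⊆ P := by rw [← hlP]; exact take_toFinset_subset l (iv + 1)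
    have hTB : T ⊆ B := hTsubP.trans hp.2.1
    have hQ' : insert v A ∩ T ∈ F :=
      hI _ hvF T hq.1 ⟨B, hxyz, Finset.union_subset hvB hTB⟩
    have hvT : v ∈ T := hwv ▸ hwT
    have hTsub : T ⊆ insert v A ∩ T := by
      refine hq.2.2.2 _ hQ' (Finset.inter_subset_right.trans hq.2.1) ?_
      · rw [hwv]
        exact Finset.mem_inter.2 ⟨Finset.mem_insert_self v A, hvT⟩
    have huT : u ∈ T := by
      rw [hTdef, List.mem_toFinset]
      have h1 : l.take iv = (l.take (iv + 1)).take iv := by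
        rw [List.take_take, min_eq_left (by omega)]
      rw [h1] at hu
      exact List.take_subset _ _ hu
    have := (hTsub huT)
    rw [Finset.mem_inter, Finset.mem_insert] at this
    rcases this.1 with h | h
    · exact huv h
    · exact huA h
  by_cases hxP' : x ∈ P'
  · by_cases hyP' : y ∈ P'
    · exfalso
      obtain ⟨⟨ix, hix⟩, hgx⟩ := List.mem_iff_get.1 (List.mem_toFinset.1 hxP')
      obtain ⟨⟨iy, hiy⟩, hgy⟩ := List.mem_iff_get.1 (List.mem_toFinset.1 hyP')
      have hixk : ix < k - 1 := by rw [List.length_take] at hix; omega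
      have hiyk : iy < k - 1 := by rw [List.length_take] at hiy; omega
      have hixl : ix < l.length := by omega
      have hiyl : iy < l.length := by omega
      have hgx' : l.get ⟨ix, hixl⟩ = x := by
        rw [get_take_aux l hixl (by omega : ix < k - 1)]
        exact hgx
      have hgy' : l.get ⟨iy, hiyl⟩ = y := by
        rw [get_take_aux l hiyl (by omega : iy < k - 1)]
        exact hgy
      have hxyB : insert x A ⊆ B := by
        rw [hBdef]
        intro a ha
        rw [Finset.mem_insert] at ha
        rcases ha with h | h
        · subst h; simp
        · simp [h]
      have hyB : insert y A ⊆ B := by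
        rw [hBdef]
        intro a ha
        rw [Finset.mem_insert] at ha
        rcases ha with h | h
        · subst h; simp
        · simp [h]
      have hne' : ix ≠ iy := by
        intro h
        apply hxyeq
        rw [← hgx', ← hgy']
        exact congrArg l.get (Fin.ext h)
      rcases lt_or_gt_of_ne hne' with hlt | hgt
      · -- x before y : use v = y
        refine main x y iy hiyl hiyk ?_ hgy' hxA hxyeq hy hyB
        have : l.get ⟨ix, hixl⟩ = (l.take iy).get ⟨ix, by rw [List.length_take]; omega⟩ :=
          get_take_aux l hixl hlt
        rw [← hgx', this]
        exact List.get_mem _ _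
      · refine main y x ix hixl hixk ?_ hgx' hyA (Ne.symm hxyeq) hx hxyB
        have : l.get ⟨iy, hiyl⟩ = (l.take ix).get ⟨iy, by rw [List.length_take]; omega⟩ :=
          get_take_aux l hiyl hgt
        rw [← hgy', this]
        exact List.get_mem _ _
    · -- y ∉ P' : left
      left
      have hsub : P' ⊆ insert x A := by
        intro a haP'
        have haB : a ∈ B := hP'B haP'
        rw [hBdef] at haB
        simp only [Finset.mem_insert] at haB ⊢
        rcases haB with h | h | h | h
        · exact absurd (h ▸ haP') hzP'
        · exact Or.inl h
        · exact absurd (h ▸ haP') hyP'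
        · exact Or.inr h
      have hun : insert x A ∪ P = insert z (insert x A) := by
        rw [hPeq, Finset.union_insert, Finset.union_eq_left.2 hsub]
      have hxB : insert x A ⊆ B := by
        rw [hBdef]
        intro a ha
        rw [Finset.mem_insert] at ha
        rcases ha with h | h
        · subst h; simp
        · simp [h]
      have := hU _ hx P hp.1 ⟨B, hxyz, by rw [hun]; exact Finset.insert_subset hzB hxB⟩
      rwa [hun] at this
  · -- x ∉ P' : right
    right
    have hsub : P' ⊆ insert y A := by
      intro a haP'
      have haB : a ∈ B := hP'B haP'
      rw [hBdef] at haB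
      simp only [Finset.mem_insert] at haB ⊢
      rcases haB with h | h | h | h
      · exact absurd (h ▸ haP') hzP'
      · exact absurd (h ▸ haP') hxP'
      · exact Or.inl h
      · exact Or.inr h
    have hun : insert y A ∪ P = insert z (insert y A) := by
      rw [hPeq, Finset.union_insert, Finset.union_eq_left.2 hsub]
    have hyB : insert y A ⊆ B := by
      rw [hBdef]
      intro a ha
      rw [Finset.mem_insert] at ha
      rcases ha with h | h
      · subst h; simp
      · simp [h]
    have := hU _ hy P hp.1 ⟨B, hxyz, by rw [hun]; exact Finset.insert_subset hzB hyB⟩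
    rwa [hun] at this

end Aux3

/-- Theorem VII.4.4 (Schmidt): in a local poset greedoid, the local forest property,
uniqueness of feasible orderings of paths, and prefixes-of-path-orderings-are-paths
are equivalent. -/
theorem statement0 (F : Set (Finset α)) (hG : IsGreedoid F)
    (hU : LocalUnion F) (hI : LocalInter F) :
    (LocalForest F ↔
      (∀ P : Finset α, IsPath F P → ∀ l₁ l₂ : List α,
        FeasibleOrdering F l₁ → l₁.toFinset = P →
        FeasibleOrdering F l₂ → l₂.toFinset = P → l₁ = l₂)) ∧
    ((∀ P : Finset α, IsPath F P → ∀ l₁ l₂ : List α,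
        FeasibleOrdering F l₁ → l₁.toFinset = P →
        FeasibleOrdering F l₂ → l₂.toFinset = P → l₁ = l₂) ↔
      (∀ P : Finset α, IsPath F P → ∀ l : List α,
        FeasibleOrdering F l → l.toFinset = P →
        ∀ i : ℕ, 1 ≤ i → i ≤ l.length → IsPath F (l.take i).toFinset)) := by
  constructor
  · constructor
    · exact fun hF => lfp_to_unique hG hU hF
    · exact fun h2 => prefix_to_lfp hG hU hI (unique_to_prefix hG hI h2)
  · constructor
    · exact fun h2 => unique_to_prefix hG hI h2
    · exact fun h3 => lfp_to_unique hG hU (prefix_to_lfp hG hU hI h3)
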